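/- (One-step bound for Problem CS.) Suppose each ∇Q_i is μ-Lipschitz (Assumption 1), for every S ⊆ {1,…,n} with |S| ≥ n−r the average Q_S is γ-strongly convex (Assumption 2), and the cost functions satisfy (0,r;ε)-redundancy. Let W ⊆ ℝ^d be convex compact with x* ∈ W and Γ := max_{w∈W} ‖w − x*‖. Fix x ∈ W, a set S ⊆ {1,…,n} with |S| = n−r, a step size η > 0, and random vectors g_j ∈ ℝ^d (j ∈ S) on a probability space with E[g_j] = ∇Q_j(x) and E‖g_j − ∇Q_j(x)‖² ≤ σ² for each j ∈ S. Let x⁺ := [x − η Σ_{j∈S} g_j]_W. Then E‖x⁺ − x*‖² ≤ (1 − 2(nγ − rμ)η + (n−r)²η²μ²)·‖x − x*‖² + 4nημε(r + (n−r)²ημ)·Γ + 4n²(n−r)²η²μ²ε² + (n−r)²η²σ². -/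

import Mathlib

open Finset MeasureTheory
open scoped RealInnerProductSpace

set_option maxHeartbeats 1000000
lemma aux_hasGradientAt_sum {d : ℕ} {ι : Type*} (T : Finset ι)
    (f : ι → EuclideanSpace ℝ (Fin d) → ℝ)
    (x : EuclideanSpace ℝ (Fin d)) (hf : ∀ i ∈ T, DifferentiableAt ℝ (f i) x) :
    HasGradientAt (fun y => ∑ i ∈ T, f i y) (∑ i ∈ T, gradient (f i) x) x := by
  rw [hasGradientAt_iff_hasFDerivAt, map_sum]
  exact HasFDerivAt.fun_sum fun i hi => (hf i hi).hasGradientAt.hasFDerivAt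

lemma aux_sum_grad_zero {d : ℕ} {ι : Type*} (T : Finset ι)
    (f : ι → EuclideanSpace ℝ (Fin d) → ℝ)
    (hf : ∀ i x, DifferentiableAt ℝ (f i) x) {y : EuclideanSpace ℝ (Fin d)}
    (hy : ∀ z, ∑ i ∈ T, f i y ≤ ∑ i ∈ T, f i z) :
    ∑ i ∈ T, gradient (f i) y = 0 := by
  have h1 : IsLocalMin (fun w => ∑ i ∈ T, f i w) y := Filter.Eventually.of_forall fun z => hy z
  have h2 := h1.fderiv_eq_zero
  have h3 := (aux_hasGradientAt_sum T f y (fun i _ => hf i y)).gradient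
  rw [← h3, gradient, h2, map_zero]

lemma aux_min_unique {d n : ℕ} (Q : Fin n → EuclideanSpace ℝ (Fin d) → ℝ) {γ : ℝ} (hγ : 0 < γ)
    (hdiff : ∀ i x, DifferentiableAt ℝ (Q i) x)
    (T : Finset (Fin n))
    (hscT : ∀ x y : EuclideanSpace ℝ (Fin d),
        γ * ‖x - y‖ ^ 2 ≤
          ⟪(T.card : ℝ)⁻¹ • (∑ j ∈ T, gradient (Q j) x - ∑ j ∈ T, gradient (Q j) y), x - y⟫)
    {y z : EuclideanSpace ℝ (Fin d)}
    (hy : ∀ w, ∑ i ∈ T, Q i y ≤ ∑ i ∈ T, Q i w)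
    (hz : ∀ w, ∑ i ∈ T, Q i z ≤ ∑ i ∈ T, Q i w) : y = z := by
  have h1 := aux_sum_grad_zero T Q hdiff hy
  have h2 := aux_sum_grad_zero T Q hdiff hz
  have h := hscT y z
  rw [h1, h2, sub_self, smul_zero, inner_zero_left] at h
  have h5 : ‖y - z‖ ^ 2 ≤ 0 := by nlinarith
  have h4 : ‖y - z‖ = 0 := by nlinarith [norm_nonneg (y - z), sq_nonneg ‖y - z‖]
  exact sub_eq_zero.mp (norm_eq_zero.mp h4)


lemma aux_proj_inner {d : ℕ} {W : Set (EuclideanSpace ℝ (Fin d))} (hW : Convex ℝ W)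
    {proj : EuclideanSpace ℝ (Fin d) → EuclideanSpace ℝ (Fin d)}
    (hproj : ∀ y, proj y ∈ W ∧ ∀ w ∈ W, ‖proj y - y‖ ≤ ‖w - y‖)
    (y : EuclideanSpace ℝ (Fin d)) {w : EuclideanSpace ℝ (Fin d)} (hw : w ∈ W) :
    ⟪y - proj y, w - proj y⟫ ≤ 0 := by
  haveI : Nonempty W := ⟨⟨w, hw⟩⟩
  have hbdd : BddBelow (Set.range fun z : W => ‖y - (z : EuclideanSpace ℝ (Fin d))‖) :=
    ⟨0, by rintro _ ⟨z, rfl⟩; exact norm_nonneg _⟩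
  have h1 : (⨅ z : W, ‖y - (z : EuclideanSpace ℝ (Fin d))‖) ≤ ‖y - proj y‖ :=
    ciInf_le hbdd ⟨proj y, (hproj y).1⟩
  have h2 : ‖y - proj y‖ ≤ ⨅ z : W, ‖y - (z : EuclideanSpace ℝ (Fin d))‖ := by
    refine le_ciInf fun z => ?_
    rw [norm_sub_rev, norm_sub_rev y]
    exact (hproj y).2 z z.2
  exact (norm_eq_iInf_iff_real_inner_le_zero hW (hproj y).1).mp (le_antisymm h2 h1) w hw

lemma aux_proj_lip {d : ℕ} {W : Set (EuclideanSpace ℝ (Fin d))} (hW : Convex ℝ W)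
    {proj : EuclideanSpace ℝ (Fin d) → EuclideanSpace ℝ (Fin d)}
    (hproj : ∀ y, proj y ∈ W ∧ ∀ w ∈ W, ‖proj y - y‖ ≤ ‖w - y‖)
    (y z : EuclideanSpace ℝ (Fin d)) : ‖proj y - proj z‖ ≤ ‖y - z‖ := by
  set p := proj y with hp0
  set q := proj z with hq0
  have h1 : ⟪y - p, q - p⟫ ≤ 0 := aux_proj_inner hW hproj y (hproj z).1
  have h2 : ⟪z - q, p - q⟫ ≤ 0 := aux_proj_inner hW hproj z (hproj y).1
  have hsplit : ⟪p - q, p - q⟫ = ⟪p - y, p - q⟫ + ⟪y - z, p - q⟫ + ⟪z - q, p - q⟫ := by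
    rw [← inner_add_left, ← inner_add_left]
    congr 1
    abel
  have h3 : ⟪p - y, p - q⟫ = ⟪y - p, q - p⟫ := by
    rw [← neg_sub y p, ← neg_sub q p, inner_neg_neg]
  have h4 : ⟪y - z, p - q⟫ ≤ ‖y - z‖ * ‖p - q‖ := real_inner_le_norm _ _
  have h5 : ⟪p - q, p - q⟫ = ‖p - q‖ ^ 2 := real_inner_self_eq_norm_sq _
  nlinarith [norm_nonneg (p - q), norm_nonneg (y - z)]

/-- one-step mean-squared-error bound for D-SGD in the asynchronous
setting (Problem CS), under Assumptions 1, 2, 4 and (0,r;ε)-redundancy. -/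
theorem stmt16 {d n r : ℕ} (hd : 1 ≤ d) (hrn : r < n)
    (Q : Fin n → EuclideanSpace ℝ (Fin d) → ℝ) (μ γ ε σ : ℝ) (hγ : 0 < γ)
    (hdiff : ∀ i x, DifferentiableAt ℝ (Q i) x)
    -- Assumption 1: each ∇Q_i is μ-Lipschitz
    (hlip : ∀ i x y,
      ‖gradient (Q i) x - gradient (Q i) y‖ ≤ μ * ‖x - y‖)
    -- Assumption 2: averages over sets of ≥ n−r agents are γ-strongly convex
    (hsc : ∀ S : Finset (Fin n), n ≤ S.card + r →
      ∀ x y : EuclideanSpace ℝ (Fin d),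
        γ * ‖x - y‖ ^ 2 ≤
          ⟪(S.card : ℝ)⁻¹ •
              (∑ j ∈ S, gradient (Q j) x - ∑ j ∈ S, gradient (Q j) y), x - y⟫)
    -- (0,r;ε)-redundancy
    (hred : ∀ Shat : Finset (Fin n), n ≤ Shat.card + r →
      ({y : EuclideanSpace ℝ (Fin d) |
          ∀ z, ∑ i ∈ Shat, Q i y ≤ ∑ i ∈ Shat, Q i z}.Nonempty ∧
        Metric.hausdorffDist
          {y : EuclideanSpace ℝ (Fin d) | ∀ z, ∑ i ∈ Shat, Q i y ≤ ∑ i ∈ Shat, Q i z}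
          {y : EuclideanSpace ℝ (Fin d) | ∀ z, ∑ i, Q i y ≤ ∑ i, Q i z} ≤ ε))
    -- convex compact set W and Euclidean projection onto it
    (W : Set (EuclideanSpace ℝ (Fin d))) (hWconv : Convex ℝ W) (hWcomp : IsCompact W)
    (proj : EuclideanSpace ℝ (Fin d) → EuclideanSpace ℝ (Fin d))
    (hproj : ∀ y, proj y ∈ W ∧ ∀ w ∈ W, ‖proj y - y‖ ≤ ‖w - y‖)
    -- x* ∈ W minimizes the total cost, and Γ = max_{w ∈ W} ‖w − x*‖
    (xstar : EuclideanSpace ℝ (Fin d)) (hxW : xstar ∈ W)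
    (hxmin : ∀ z, ∑ i, Q i xstar ≤ ∑ i, Q i z)
    (Γ : ℝ) (hΓ : IsGreatest ((fun w => ‖w - xstar‖) '' W) Γ)
    -- current iterate, responding agents, step size
    (x : EuclideanSpace ℝ (Fin d)) (hx : x ∈ W)
    (S : Finset (Fin n)) (hS : S.card + r = n)
    (η : ℝ) (hη : 0 < η)
    -- stochastic gradients: unbiased with variance at most σ²
    {Ω : Type} {mΩ : MeasurableSpace Ω} (P : Measure Ω) [IsProbabilityMeasure P]
    (g : Fin n → Ω → EuclideanSpace ℝ (Fin d))
    (hgLp : ∀ j ∈ S, MemLp (g j) 2 P)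
    (hmean : ∀ j ∈ S, (∫ ω, g j ω ∂P) = gradient (Q j) x)
    (hvar : ∀ j ∈ S, (∫ ω, ‖g j ω - gradient (Q j) x‖ ^ 2 ∂P) ≤ σ ^ 2) :
    (∫ ω, ‖proj (x - η • ∑ j ∈ S, g j ω) - xstar‖ ^ 2 ∂P) ≤
      (1 - 2 * ((n : ℝ) * γ - r * μ) * η + ((n : ℝ) - r) ^ 2 * η ^ 2 * μ ^ 2)
          * ‖x - xstar‖ ^ 2
        + 4 * n * η * μ * ε * ((r : ℝ) + ((n : ℝ) - r) ^ 2 * η * μ) * Γ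
        + 4 * (n : ℝ) ^ 2 * ((n : ℝ) - r) ^ 2 * η ^ 2 * μ ^ 2 * ε ^ 2
        + ((n : ℝ) - r) ^ 2 * η ^ 2 * σ ^ 2 := by
  classical
  have hn : 0 < n := lt_of_le_of_lt (Nat.zero_le r) hrn
  set A : ℝ := ‖x - xstar‖ with hA0
  set Gx : Fin n → EuclideanSpace ℝ (Fin d) := fun j => gradient (Q j) x with hGx0
  set Gs : Fin n → EuclideanSpace ℝ (Fin d) := fun j => gradient (Q j) xstar with hGs0
  set h : EuclideanSpace ℝ (Fin d) := ∑ j ∈ S, Gx j with hh0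
  set u : EuclideanSpace ℝ (Fin d) := x - η • h - xstar with hu0
  set v : Ω → EuclideanSpace ℝ (Fin d) := fun ω => ∑ j ∈ S, (g j ω - Gx j) with hv0
  -- basic facts
  have hμ : 0 ≤ μ := by
    have h1 := hlip ⟨0, hn⟩ (EuclideanSpace.single ⟨0, hd⟩ (1:ℝ)) 0
    rw [sub_zero, EuclideanSpace.norm_single] at h1
    have h2 := le_trans (norm_nonneg _) h1
    simpa using h2
  have hε : 0 ≤ ε :=
    le_trans Metric.hausdorffDist_nonneg (hred univ (by simp [Finset.card_univ])).2
  have hAΓ : A ≤ Γ := hΓ.2 ⟨x, hx, rfl⟩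
  have hΓ0 : 0 ≤ Γ := le_trans (norm_nonneg _) hAΓ
  have hScard : (S.card : ℝ) = (n : ℝ) - r := by
    have h1 := congrArg (Nat.cast : ℕ → ℝ) hS
    push_cast at h1
    linarith
  have hSccard : (Sᶜ.card : ℝ) = (r : ℝ) := by
    have h1 : Sᶜ.card = n - S.card := by
      rw [Finset.card_compl, Fintype.card_fin]
    have : S.card ≤ n := by omega
    rw [h1]
    push_cast [Nat.cast_sub this]
    linarith
  have hgradstar : ∑ i, Gs i = 0 := aux_sum_grad_zero univ Q hdiff hxmin
  -- per-agent gradient bound at xstar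
  have hBset : {y : EuclideanSpace ℝ (Fin d) | ∀ z, ∑ i, Q i y ≤ ∑ i, Q i z} = {xstar} := by
    ext y
    simp only [Set.mem_setOf_eq, Set.mem_singleton_iff]
    constructor
    · intro hyy
      exact aux_min_unique Q hγ hdiff univ
        (by simpa [Finset.card_univ] using hsc univ (by simp [Finset.card_univ])) hyy hxmin
    · rintro rfl; exact hxmin
  have hjstar : 1 ≤ r → ∀ j : Fin n, ‖Gs j‖ ≤ 2 * n * μ * ε := by
    intro hr j
    set T : Finset (Fin n) := univ.erase j with hT0
    have hTcard : T.card + 1 = n := by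
      rw [hT0, Finset.card_erase_of_mem (mem_univ j), Finset.card_univ, Fintype.card_fin]
      omega
    have hTc : n ≤ T.card + r := by omega
    obtain ⟨xj, hxj⟩ := (hred T hTc).1
    have hxj' : ∀ z, ∑ i ∈ T, Q i xj ≤ ∑ i ∈ T, Q i z := hxj
    have hAset : {y : EuclideanSpace ℝ (Fin d) | ∀ z, ∑ i ∈ T, Q i y ≤ ∑ i ∈ T, Q i z}
        = {xj} := by
      ext y
      simp only [Set.mem_setOf_eq, Set.mem_singleton_iff]
      constructor
      · intro hyy
        exact aux_min_unique Q hγ hdiff T (hsc T hTc) hyy hxj'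
      · rintro rfl; exact hxj'
    have hdd := (hred T hTc).2
    rw [hAset, hBset] at hdd
    have fin : EMetric.hausdorffEdist ({xj} : Set (EuclideanSpace ℝ (Fin d))) {xstar} ≠ ⊤ :=
      Metric.hausdorffEdist_ne_top_of_nonempty_of_bounded ⟨xj, rfl⟩ ⟨xstar, rfl⟩
        Bornology.isBounded_singleton Bornology.isBounded_singleton
    have hdist : ‖xj - xstar‖ ≤ ε := by
      have h1 := Metric.infDist_le_hausdorffDist_of_mem (Set.mem_singleton xj) fin
      rw [Metric.infDist_singleton, dist_eq_norm] at h1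
      linarith
    have hTz : ∑ i ∈ T, gradient (Q i) xj = 0 := aux_sum_grad_zero T Q hdiff hxj'
    have hsplit := Finset.sum_erase_add univ (fun i => gradient (Q i) xj) (mem_univ j)
    have huniv : gradient (Q j) xj = ∑ i, gradient (Q i) xj := by
      rw [← hsplit, ← hT0]
      rw [hTz]
      abel
    have h5 : ‖∑ i, gradient (Q i) xj‖ ≤ n * μ * ε := by
      have he : ∑ i, gradient (Q i) xj = ∑ i, (gradient (Q i) xj - Gs i) := by
        rw [Finset.sum_sub_distrib, hgradstar, sub_zero]
      rw [he]
      calc ‖∑ i, (gradient (Q i) xj - Gs i)‖ ≤ ∑ i, ‖gradient (Q i) xj - Gs i‖ :=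
            norm_sum_le _ _
        _ ≤ ∑ _i : Fin n, μ * ε := by
            refine Finset.sum_le_sum fun i _ => le_trans (hlip i xj xstar) ?_
            exact mul_le_mul_of_nonneg_left hdist hμ
        _ = n * (μ * ε) := by
            rw [Finset.sum_const, Finset.card_univ, Fintype.card_fin, nsmul_eq_mul]
        _ = n * μ * ε := by ring
    have h6 : ‖Gs j - gradient (Q j) xj‖ ≤ μ * ε := by
      refine le_trans (hlip j xstar xj) ?_
      rw [← norm_sub_rev]
      exact mul_le_mul_of_nonneg_left hdist hμ
    have h7 : ‖Gs j‖ ≤ ‖Gs j - gradient (Q j) xj‖ + ‖gradient (Q j) xj‖ := by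
      calc ‖Gs j‖ = ‖(Gs j - gradient (Q j) xj) + gradient (Q j) xj‖ := by congr 1; abel
        _ ≤ _ := norm_add_le _ _
    have h8 : ‖gradient (Q j) xj‖ ≤ n * μ * ε := by rw [huniv]; exact h5
    have hn1 : (1 : ℝ) ≤ n := by exact_mod_cast hn
    nlinarith [mul_nonneg hμ hε]
  -- norm bounds on partial sums of gradients at xstar
  have hBsum1 : ‖∑ j ∈ Sᶜ, Gs j‖ ≤ 2 * r * n * μ * ε := by
    rcases Nat.eq_zero_or_pos r with hr | hr
    · have hSu : S = univ := Finset.eq_univ_of_card S (by simp only [Fintype.card_fin]; omega)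
      rw [hSu, Finset.compl_univ, Finset.sum_empty, norm_zero, hr]
      simp
    · calc ‖∑ j ∈ Sᶜ, Gs j‖ ≤ ∑ j ∈ Sᶜ, ‖Gs j‖ := norm_sum_le _ _
        _ ≤ ∑ _j ∈ Sᶜ, (2 * n * μ * ε) :=
            Finset.sum_le_sum fun j _ => hjstar hr j
        _ = (Sᶜ.card : ℝ) * (2 * n * μ * ε) := by
            rw [Finset.sum_const, nsmul_eq_mul]
        _ = 2 * r * n * μ * ε := by rw [hSccard]; ring
  have hBsum2 : ‖∑ j ∈ S, Gs j‖ ≤ 2 * n * ((n:ℝ) - r) * μ * ε := by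
    rcases Nat.eq_zero_or_pos r with hr | hr
    · have hSu : S = univ := Finset.eq_univ_of_card S (by simp only [Fintype.card_fin]; omega)
      rw [hSu, hgradstar, norm_zero]
      have : ((n:ℝ) - r) ≥ 0 := by
        have : (r:ℝ) ≤ n := by exact_mod_cast hrn.le
        linarith
      positivity
    · calc ‖∑ j ∈ S, Gs j‖ ≤ ∑ j ∈ S, ‖Gs j‖ := norm_sum_le _ _
        _ ≤ ∑ _j ∈ S, (2 * n * μ * ε) :=
            Finset.sum_le_sum fun j _ => hjstar hr j
        _ = (S.card : ℝ) * (2 * n * μ * ε) := by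
            rw [Finset.sum_const, nsmul_eq_mul]
        _ = 2 * n * ((n:ℝ) - r) * μ * ε := by rw [hScard]; ring
  -- inner product lower bound
  have hnR : (0:ℝ) < n := by exact_mod_cast hn
  have hfull : (n:ℝ) * γ * A ^ 2 ≤ ⟪∑ i, Gx i - ∑ i, Gs i, x - xstar⟫ := by
    have h1 := hsc univ (by simp [Finset.card_univ]) x xstar
    rw [real_inner_smul_left, Finset.card_univ, Fintype.card_fin] at h1
    calc (n:ℝ) * γ * A ^ 2 = (n:ℝ) * (γ * A ^ 2) := by ring
      _ ≤ (n:ℝ) * (((n:ℝ))⁻¹ * ⟪∑ i, Gx i - ∑ i, Gs i, x - xstar⟫) :=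
          mul_le_mul_of_nonneg_left h1 hnR.le
      _ = ⟪∑ i, Gx i - ∑ i, Gs i, x - xstar⟫ := by field_simp
  have hcomp : ⟪∑ j ∈ Sᶜ, Gx j - ∑ j ∈ Sᶜ, Gs j, x - xstar⟫ ≤ r * μ * A ^ 2 := by
    rw [← Finset.sum_sub_distrib, sum_inner]
    calc ∑ j ∈ Sᶜ, ⟪Gx j - Gs j, x - xstar⟫ ≤ ∑ _j ∈ Sᶜ, μ * A ^ 2 := by
          refine Finset.sum_le_sum fun j _ => ?_
          refine le_trans (real_inner_le_norm _ _) ?_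
          have := hlip j x xstar
          calc ‖Gx j - Gs j‖ * ‖x - xstar‖ ≤ (μ * ‖x - xstar‖) * ‖x - xstar‖ :=
                mul_le_mul_of_nonneg_right this (norm_nonneg _)
            _ = μ * A ^ 2 := by rw [← hA0]; ring
      _ = (Sᶜ.card : ℝ) * (μ * A ^ 2) := by rw [Finset.sum_const, nsmul_eq_mul]
      _ = r * μ * A ^ 2 := by rw [hSccard]; ring
  have hS0 : ∑ j ∈ S, Gs j = -∑ j ∈ Sᶜ, Gs j := by
    have h1 := Finset.sum_add_sum_compl S Gs
    rw [hgradstar] at h1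
    exact eq_neg_of_add_eq_zero_left h1
  have hs2 : -(2 * r * n * μ * ε * Γ) ≤ ⟪∑ j ∈ S, Gs j, x - xstar⟫ := by
    have h3 : ‖∑ j ∈ S, Gs j‖ ≤ 2 * r * n * μ * ε := by rw [hS0, norm_neg]; exact hBsum1
    have h4 := abs_real_inner_le_norm (∑ j ∈ S, Gs j) (x - xstar)
    have hcoef : (0:ℝ) ≤ 2 * r * n * μ * ε := by positivity
    have h5 : ‖∑ j ∈ S, Gs j‖ * ‖x - xstar‖ ≤ (2 * r * n * μ * ε) * Γ :=
      mul_le_mul h3 hAΓ (norm_nonneg _) hcoef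
    have h6 := neg_abs_le ⟪∑ j ∈ S, Gs j, x - xstar⟫
    linarith
  have hIP : ((n:ℝ) * γ - r * μ) * A ^ 2 - 2 * r * n * μ * ε * Γ ≤ ⟪h, x - xstar⟫ := by
    have hvec : h = ((∑ i, Gx i - ∑ i, Gs i) - (∑ j ∈ Sᶜ, Gx j - ∑ j ∈ Sᶜ, Gs j))
        + ∑ j ∈ S, Gs j := by
      rw [hh0, ← Finset.sum_add_sum_compl S Gx, ← Finset.sum_add_sum_compl S Gs]
      abel
    rw [hvec, inner_add_left, inner_sub_left]
    linarith
  -- norm bound on h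
  have hnormh : ‖h‖ ≤ ((n:ℝ) - r) * μ * A + 2 * n * ((n:ℝ) - r) * μ * ε := by
    have hd1 : ‖∑ j ∈ S, (Gx j - Gs j)‖ ≤ ((n:ℝ) - r) * μ * A := by
      calc ‖∑ j ∈ S, (Gx j - Gs j)‖ ≤ ∑ j ∈ S, ‖Gx j - Gs j‖ := norm_sum_le _ _
        _ ≤ ∑ _j ∈ S, μ * A := by
            refine Finset.sum_le_sum fun j _ => ?_
            simpa [hA0] using hlip j x xstar
        _ = (S.card : ℝ) * (μ * A) := by rw [Finset.sum_const, nsmul_eq_mul]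
        _ = ((n:ℝ) - r) * μ * A := by rw [hScard]; ring
    have hsplit2 : h = ∑ j ∈ S, (Gx j - Gs j) + ∑ j ∈ S, Gs j := by
      rw [hh0, Finset.sum_sub_distrib]
      abel
    calc ‖h‖ ≤ ‖∑ j ∈ S, (Gx j - Gs j)‖ + ‖∑ j ∈ S, Gs j‖ := by
          rw [hsplit2]; exact norm_add_le _ _
      _ ≤ ((n:ℝ) - r) * μ * A + 2 * n * ((n:ℝ) - r) * μ * ε := add_le_add hd1 hBsum2
  -- deterministic bound
  have hdet : ‖u‖ ^ 2 ≤
      (1 - 2 * ((n : ℝ) * γ - r * μ) * η + ((n : ℝ) - r) ^ 2 * η ^ 2 * μ ^ 2) * A ^ 2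
        + 4 * n * η * μ * ε * ((r : ℝ) + ((n : ℝ) - r) ^ 2 * η * μ) * Γ
        + 4 * (n : ℝ) ^ 2 * ((n : ℝ) - r) ^ 2 * η ^ 2 * μ ^ 2 * ε ^ 2 := by
    have hueq : ‖u‖ ^ 2 = A ^ 2 - 2 * η * ⟪h, x - xstar⟫ + η ^ 2 * ‖h‖ ^ 2 := by
      have huu : u = (x - xstar) - η • h := by rw [hu0]; abel
      rw [huu, norm_sub_sq_real, real_inner_smul_right, real_inner_comm, norm_smul,
        Real.norm_eq_abs, mul_pow, sq_abs, ← hA0]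
      ring
    have hnr : (0:ℝ) ≤ (n:ℝ) - r := by
      have : (r:ℝ) ≤ n := by exact_mod_cast hrn.le
      linarith
    have hAnn : (0:ℝ) ≤ A := norm_nonneg _
    have hb2 : ‖h‖ ^ 2 ≤ (((n:ℝ) - r) * μ * A + 2 * n * ((n:ℝ) - r) * μ * ε) ^ 2 :=
      pow_le_pow_left₀ (norm_nonneg _) hnormh 2
    have hcross : 4 * (n:ℝ) * ((n:ℝ) - r) ^ 2 * η ^ 2 * μ ^ 2 * ε * A ≤
        4 * (n:ℝ) * ((n:ℝ) - r) ^ 2 * η ^ 2 * μ ^ 2 * ε * Γ :=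
      mul_le_mul_of_nonneg_left hAΓ (by positivity)
    have e1 : η * (((n:ℝ) * γ - r * μ) * A ^ 2 - 2 * r * n * μ * ε * Γ) ≤
        η * ⟪h, x - xstar⟫ := mul_le_mul_of_nonneg_left hIP hη.le
    have e2 : η ^ 2 * ‖h‖ ^ 2 ≤
        η ^ 2 * (((n:ℝ) - r) * μ * A + 2 * n * ((n:ℝ) - r) * μ * ε) ^ 2 :=
      mul_le_mul_of_nonneg_left hb2 (sq_nonneg η)
    rw [hueq]
    nlinarith [e1, e2, hcross]
  -- stochastic facts
  have hvLp : MemLp v 2 P :=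
    memLp_finset_sum S (f := fun j ω => g j ω - Gx j) fun j hj => (hgLp j hj).sub (memLp_const _)
  have hvInt : Integrable v P := hvLp.integrable one_le_two
  have hvsqInt : Integrable (fun ω => ‖v ω‖ ^ 2) P := by
    have h1 := hvLp.integrable_norm_rpow (by norm_num) (by norm_num)
    simpa [Real.rpow_natCast] using h1
  have hgInt : ∀ j ∈ S, Integrable (g j) P := fun j hj => (hgLp j hj).integrable one_le_two
  have hvmean : (∫ ω, v ω ∂P) = 0 := by
    simp only [hv0]
    rw [integral_finset_sum S (f := fun j ω => g j ω - Gx j) (fun j hj => (hgInt j hj).sub (integrable_const _))]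
    refine Finset.sum_eq_zero fun j hj => ?_
    rw [integral_sub (hgInt j hj) (integrable_const _), hmean j hj, integral_const]
    simp [hGx0]
  have hsqint : ∀ j ∈ S, Integrable (fun ω => ‖g j ω - Gx j‖ ^ 2) P := by
    intro j hj
    have h1 := ((hgLp j hj).sub (memLp_const (Gx j))).integrable_norm_rpow
      (by norm_num) (by norm_num)
    simpa [Real.rpow_natCast] using h1
  have hvvar : (∫ ω, ‖v ω‖ ^ 2 ∂P) ≤ ((n:ℝ) - r) ^ 2 * σ ^ 2 := by
    have hpt : ∀ ω, ‖v ω‖ ^ 2 ≤ (S.card : ℝ) * ∑ j ∈ S, ‖g j ω - Gx j‖ ^ 2 := by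
      intro ω
      calc ‖v ω‖ ^ 2 ≤ (∑ j ∈ S, ‖g j ω - Gx j‖) ^ 2 := by
            have := norm_sum_le S (fun j => g j ω - Gx j)
            exact pow_le_pow_left₀ (norm_nonneg _) this 2
        _ ≤ (S.card : ℝ) * ∑ j ∈ S, ‖g j ω - Gx j‖ ^ 2 := by
            exact_mod_cast sq_sum_le_card_mul_sum_sq (s := S) (f := fun j => ‖g j ω - Gx j‖)
    have hRint : Integrable (fun ω => (S.card : ℝ) * ∑ j ∈ S, ‖g j ω - Gx j‖ ^ 2) P :=
      (integrable_finset_sum S hsqint).const_mul _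
    calc (∫ ω, ‖v ω‖ ^ 2 ∂P) ≤ ∫ ω, (S.card : ℝ) * ∑ j ∈ S, ‖g j ω - Gx j‖ ^ 2 ∂P :=
          integral_mono hvsqInt hRint hpt
      _ = (S.card : ℝ) * ∑ j ∈ S, ∫ ω, ‖g j ω - Gx j‖ ^ 2 ∂P := by
          rw [integral_const_mul, integral_finset_sum S hsqint]
      _ ≤ (S.card : ℝ) * ∑ _j ∈ S, σ ^ 2 := by
          have hc : (0:ℝ) ≤ (S.card : ℝ) := Nat.cast_nonneg _
          refine mul_le_mul_of_nonneg_left (Finset.sum_le_sum fun j hj => hvar j hj) hc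
      _ = ((n:ℝ) - r) ^ 2 * σ ^ 2 := by
          rw [Finset.sum_const, nsmul_eq_mul, hScard]; ring
  -- projection facts
  have hlipproj : LipschitzWith 1 proj := by
    refine LipschitzWith.of_dist_le_mul fun a b => ?_
    rw [NNReal.coe_one, one_mul, dist_eq_norm, dist_eq_norm]
    exact aux_proj_lip hWconv hproj a b
  have hprojx : proj xstar = xstar := by
    have h1 := (hproj xstar).2 xstar hxW
    rw [sub_self, norm_zero] at h1
    have h2 : ‖proj xstar - xstar‖ = 0 := le_antisymm h1 (norm_nonneg _)
    exact sub_eq_zero.mp (norm_eq_zero.mp h2)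
  have hptw : ∀ ω, ‖proj (x - η • ∑ j ∈ S, g j ω) - xstar‖ ^ 2 ≤
      ‖(x - η • ∑ j ∈ S, g j ω) - xstar‖ ^ 2 := by
    intro ω
    have h1 : ‖proj (x - η • ∑ j ∈ S, g j ω) - xstar‖ ≤
        ‖(x - η • ∑ j ∈ S, g j ω) - xstar‖ := by
      conv_lhs => rw [← hprojx]
      exact aux_proj_lip hWconv hproj _ _
    exact pow_le_pow_left₀ (norm_nonneg _) h1 2
  have hyeq : ∀ ω, (x - η • ∑ j ∈ S, g j ω) - xstar = u - η • v ω := by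
    intro ω
    simp only [hu0, hv0]
    rw [Finset.sum_sub_distrib, ← hh0, smul_sub]
    abel
  have hyLp : MemLp (fun ω => (x - η • ∑ j ∈ S, g j ω) - xstar) 2 P := by
    have hsLp : MemLp (fun ω => ∑ j ∈ S, g j ω) 2 P :=
      memLp_finset_sum S (f := fun j => g j) fun j hj => hgLp j hj
    exact ((memLp_const x).sub (hsLp.const_smul η)).sub (memLp_const xstar)
  have hyInt : Integrable (fun ω => ‖(x - η • ∑ j ∈ S, g j ω) - xstar‖ ^ 2) P := by
    have h1 := hyLp.integrable_norm_rpow (by norm_num) (by norm_num)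
    simpa [Real.rpow_natCast] using h1
  have hmeasL : AEStronglyMeasurable
      (fun ω => ‖proj (x - η • ∑ j ∈ S, g j ω) - xstar‖ ^ 2) P := by
    have h1 : AEStronglyMeasurable (fun ω => x - η • ∑ j ∈ S, g j ω) P :=
      aestronglyMeasurable_const.sub
        ((Finset.aestronglyMeasurable_fun_sum S
          (fun j hj => (hgLp j hj).aestronglyMeasurable)).const_smul η)
    exact (continuous_pow 2).comp_aestronglyMeasurable
      ((hlipproj.continuous.comp_aestronglyMeasurable h1).sub aestronglyMeasurable_const).norm
  have hLint : Integrable (fun ω => ‖proj (x - η • ∑ j ∈ S, g j ω) - xstar‖ ^ 2) P := by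
    refine hyInt.mono' hmeasL (Filter.Eventually.of_forall fun ω => ?_)
    rw [Real.norm_eq_abs, abs_of_nonneg (by positivity)]
    exact hptw ω
  have hiInt : Integrable (fun ω => ⟪u, v ω⟫) P := hvInt.const_inner u
  have hinner0 : (∫ ω, ⟪u, v ω⟫ ∂P) = 0 := by
    rw [integral_inner hvInt, hvmean, inner_zero_right]
  have hexp : (∫ ω, ‖(x - η • ∑ j ∈ S, g j ω) - xstar‖ ^ 2 ∂P)
      = ‖u‖ ^ 2 + η ^ 2 * ∫ ω, ‖v ω‖ ^ 2 ∂P := by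
    have hpteq : ∀ ω, ‖(x - η • ∑ j ∈ S, g j ω) - xstar‖ ^ 2
        = ‖u‖ ^ 2 - (2 * η) * ⟪u, v ω⟫ + η ^ 2 * ‖v ω‖ ^ 2 := by
      intro ω
      rw [hyeq ω, norm_sub_sq_real, real_inner_smul_right, norm_smul, Real.norm_eq_abs,
        mul_pow, sq_abs]
      ring
    calc (∫ ω, ‖(x - η • ∑ j ∈ S, g j ω) - xstar‖ ^ 2 ∂P)
        = ∫ ω, (‖u‖ ^ 2 - (2 * η) * ⟪u, v ω⟫ + η ^ 2 * ‖v ω‖ ^ 2) ∂P :=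
          integral_congr_ae (Filter.Eventually.of_forall hpteq)
      _ = ‖u‖ ^ 2 + η ^ 2 * ∫ ω, ‖v ω‖ ^ 2 ∂P := by
          have i0 : Integrable (fun ω => (2 * η) * ⟪u, v ω⟫) P := hiInt.const_mul _
          have i1 : Integrable (fun ω => ‖u‖ ^ 2 - (2 * η) * ⟪u, v ω⟫) P :=
            (integrable_const _).sub i0
          have i2 : Integrable (fun ω => η ^ 2 * ‖v ω‖ ^ 2) P := hvsqInt.const_mul _
          rw [integral_add i1 i2, integral_sub (integrable_const _) i0, integral_const,
            integral_const_mul, integral_const_mul, hinner0]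
          simp [measure_univ]
  have hfin : η ^ 2 * (∫ ω, ‖v ω‖ ^ 2 ∂P) ≤ η ^ 2 * (((n:ℝ) - r) ^ 2 * σ ^ 2) :=
    mul_le_mul_of_nonneg_left hvvar (sq_nonneg η)
  calc (∫ ω, ‖proj (x - η • ∑ j ∈ S, g j ω) - xstar‖ ^ 2 ∂P)
      ≤ ∫ ω, ‖(x - η • ∑ j ∈ S, g j ω) - xstar‖ ^ 2 ∂P :=
        integral_mono hLint hyInt hptw
    _ = ‖u‖ ^ 2 + η ^ 2 * ∫ ω, ‖v ω‖ ^ 2 ∂P := hexp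
    _ ≤ (1 - 2 * ((n : ℝ) * γ - r * μ) * η + ((n : ℝ) - r) ^ 2 * η ^ 2 * μ ^ 2) * A ^ 2
        + 4 * n * η * μ * ε * ((r : ℝ) + ((n : ℝ) - r) ^ 2 * η * μ) * Γ
        + 4 * (n : ℝ) ^ 2 * ((n : ℝ) - r) ^ 2 * η ^ 2 * μ ^ 2 * ε ^ 2
        + ((n : ℝ) - r) ^ 2 * η ^ 2 * σ ^ 2 := by nlinarith [hdet, hfin]
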